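/- There exists an absolute constant c_C > 0 such that whenever 0 ≤ 1/p ≤ 1/2 and 1/2 ≤ 1/q ≤ 1, for every integer N ≥ 1 one has c_C · N^{1/2 − 1/p} ≤ C_N(p→q) ≤ N^{1/2 − 1/p}; the upper bound means ‖f‖_{L^q} ≤ N^{1/2 − 1/p} ‖a‖_{ℓ^p} for all a ∈ ℂ^N, and the lower bound means there exists a ∈ ℂ^N \ {0} with ‖f‖_{L^q} ≥ c_C N^{1/2 − 1/p} ‖a‖_{ℓ^p}. -/

import Mathlib

open scoped ENNReal

/-- The `ℓ^p` norm of the vector `(a 0, …, a (N-1)) ∈ ℂ^N`, for `p ∈ [1,∞]`. -/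
noncomputable def lpNorm (p : ℝ≥0∞) (N : ℕ) (a : ℕ → ℂ) : ℝ :=
  if p = ⊤ then ((Finset.range N).sup fun n => ‖a n‖₊ : NNReal)
  else (∑ n ∈ Finset.range N, ‖a n‖ ^ p.toReal) ^ (1 / p.toReal)

/-- The trigonometric sum `f(t) = ∑_{n=0}^{N-1} a_n e^{int}`. -/
noncomputable def trigSum (N : ℕ) (a : ℕ → ℂ) (t : ℝ) : ℂ :=
  ∑ n ∈ Finset.range N, a n * Complex.exp (Complex.I * n * t)

/-- The (normalized) `L^q` norm of a `2π`-periodic function on `[-π,π]`, for `q ∈ [1,∞]`. -/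
noncomputable def LqNorm (q : ℝ≥0∞) (f : ℝ → ℂ) : ℝ :=
  if q = ⊤ then ⨆ t : Set.Icc (-Real.pi) Real.pi, ‖f ↑t‖
  else ((2 * Real.pi)⁻¹ * ∫ t in (-Real.pi)..Real.pi, ‖f t‖ ^ q.toReal) ^ (1 / q.toReal)


open MeasureTheory Finset intervalIntegral

lemma trigSum_cont (N : ℕ) (a : ℕ → ℂ) : Continuous (trigSum N a) := by
  unfold trigSum; fun_prop

lemma integral_exp_int (k : ℤ) :
    (∫ t in (-Real.pi)..Real.pi, Complex.exp (Complex.I * k * t)) =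
      if k = 0 then ((2 * Real.pi : ℝ) : ℂ) else 0 := by
  rcases eq_or_ne k 0 with hk | hk
  · subst hk
    simp only [Int.cast_zero, mul_zero, zero_mul, Complex.exp_zero, if_pos rfl]
    rw [intervalIntegral.integral_const, Complex.real_smul]
    push_cast
    ring
  · rw [if_neg hk, integral_exp_mul_complex
      (mul_ne_zero Complex.I_ne_zero (Int.cast_ne_zero.mpr hk))]
    have h1 : Complex.I * (k : ℂ) * ((Real.pi : ℝ) : ℂ) = (k : ℤ) * ((Real.pi : ℝ) * Complex.I) := by
      ring
    have h2 : Complex.I * (k : ℂ) * ((-Real.pi : ℝ) : ℂ) = (k : ℤ) * (-(((Real.pi : ℝ) : ℂ) * Complex.I)) := by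
      push_cast; ring
    rw [h1, h2, Complex.exp_int_mul, Complex.exp_int_mul, Complex.exp_neg, Complex.exp_pi_mul_I]
    norm_num

open Complex in
lemma parseval (N : ℕ) (a : ℕ → ℂ) :
    (2 * Real.pi)⁻¹ * ∫ t in (-Real.pi)..Real.pi, ‖trigSum N a t‖ ^ (2:ℝ)
      = ∑ n ∈ Finset.range N, ‖a n‖ ^ 2 := by
  have hle : -Real.pi ≤ Real.pi := by linarith [Real.pi_pos]
  set F := fun t : ℝ => trigSum N a t * (starRingEnd ℂ) (trigSum N a t) with hF
  have hFcont : Continuous F := by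
    apply (trigSum_cont N a).mul
    exact Complex.continuous_conj.comp (trigSum_cont N a)
  -- pointwise expansion
  have expand : ∀ t : ℝ, F t
      = ∑ m ∈ Finset.range N, ∑ n ∈ Finset.range N,
          (a m * (starRingEnd ℂ) (a n)) * Complex.exp (Complex.I * ((m - n : ℤ) : ℂ) * t) := by
    intro t
    simp only [hF, trigSum, map_sum, Finset.sum_mul_sum]
    refine Finset.sum_congr rfl fun m _ => Finset.sum_congr rfl fun n _ => ?_
    rw [map_mul, ← Complex.exp_conj]
    have hc : (starRingEnd ℂ) (Complex.I * n * t) = -(Complex.I * n * t) := by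
      simp [Complex.conj_I]
    rw [hc]
    calc a m * Complex.exp (Complex.I * m * t) * ((starRingEnd ℂ) (a n) * Complex.exp (-(Complex.I * n * t)))
        = (a m * (starRingEnd ℂ) (a n)) * (Complex.exp (Complex.I * m * t) * Complex.exp (-(Complex.I * n * t))) := by ring
      _ = (a m * (starRingEnd ℂ) (a n)) * Complex.exp (Complex.I * ((m - n : ℤ) : ℂ) * t) := by
          rw [← Complex.exp_add]
          congr 1
          push_cast
          ring_nf
  -- the complex integral
  have hint : (∫ t in (-Real.pi)..Real.pi, F t)
      = ((2 * Real.pi : ℝ) : ℂ) * ∑ n ∈ Finset.range N, ((‖a n‖ : ℂ)) ^ 2 := by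
    simp only [expand]
    rw [intervalIntegral.integral_finset_sum]
    swap
    · intro m _
      apply Continuous.intervalIntegrable
      fun_prop
    have : ∀ m ∈ Finset.range N,
        (∫ t in (-Real.pi)..Real.pi, ∑ n ∈ Finset.range N,
          (a m * (starRingEnd ℂ) (a n)) * Complex.exp (Complex.I * ((m - n : ℤ) : ℂ) * t))
        = ∑ n ∈ Finset.range N, (a m * (starRingEnd ℂ) (a n)) *
            (if (m - n : ℤ) = 0 then ((2 * Real.pi : ℝ) : ℂ) else 0) := by
      intro m _
      rw [intervalIntegral.integral_finset_sum]
      swap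
      · intro n _
        apply Continuous.intervalIntegrable
        fun_prop
      refine Finset.sum_congr rfl fun n _ => ?_
      rw [intervalIntegral.integral_const_mul, integral_exp_int]
    rw [Finset.sum_congr rfl this]
    have diag : ∀ m ∈ Finset.range N,
        (∑ n ∈ Finset.range N, (a m * (starRingEnd ℂ) (a n)) *
            (if (m - n : ℤ) = 0 then ((2 * Real.pi : ℝ) : ℂ) else 0))
        = ((2 * Real.pi : ℝ) : ℂ) * (‖a m‖ : ℂ) ^ 2 := by
      intro m hm
      have : ∀ n ∈ Finset.range N, (a m * (starRingEnd ℂ) (a n)) *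
            (if (m - n : ℤ) = 0 then ((2 * Real.pi : ℝ) : ℂ) else 0)
          = if n = m then (a m * (starRingEnd ℂ) (a n)) * ((2 * Real.pi : ℝ) : ℂ) else 0 := by
        intro n _
        have hiff : ((m - n : ℤ) = 0) ↔ (n = m) := by omega
        by_cases h : n = m
        · rw [if_pos h, if_pos (hiff.mpr h)]
        · rw [if_neg h, if_neg (fun hc => h (hiff.mp hc)), mul_zero]
      rw [Finset.sum_congr rfl this, Finset.sum_ite_eq' (Finset.range N) m, if_pos hm,
        Complex.mul_conj]
      rw [Complex.normSq_eq_norm_sq]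
      push_cast
      ring
    rw [Finset.sum_congr rfl diag, ← Finset.mul_sum]
  -- pass to real parts
  have habs : ∀ t : ℝ, ‖trigSum N a t‖ ^ (2:ℝ) = (F t).re := by
    intro t
    have h1 : (F t).re = Complex.normSq (trigSum N a t) := by
      rw [hF]; simp [Complex.mul_conj]
    rw [h1, show ((2:ℝ)) = ((2:ℕ) : ℝ) by norm_num, Real.rpow_natCast,
      Complex.normSq_eq_norm_sq]
  have hInt : MeasureTheory.IntegrableOn F (Set.Ioc (-Real.pi) Real.pi) MeasureTheory.volume :=
    (intervalIntegrable_iff_integrableOn_Ioc_of_le hle).mp (hFcont.intervalIntegrable _ _)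
  have : (∫ t in (-Real.pi)..Real.pi, ‖trigSum N a t‖ ^ (2:ℝ))
      = (∫ t in (-Real.pi)..Real.pi, F t).re := by
    rw [intervalIntegral.integral_of_le hle, intervalIntegral.integral_of_le hle]
    rw [MeasureTheory.integral_congr_ae (Filter.Eventually.of_forall (fun t => habs t))]
    exact integral_re hInt
  rw [this, hint]
  have : (((2 * Real.pi : ℝ) : ℂ) * ∑ n ∈ Finset.range N, ((‖a n‖ : ℂ)) ^ 2)
      = (((2 * Real.pi) * ∑ n ∈ Finset.range N, ‖a n‖ ^ 2 : ℝ) : ℂ) := by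
    push_cast
    ring
  rw [this, Complex.ofReal_re]
  have h2pi : (2 * Real.pi) ≠ 0 := by positivity
  field_simp

lemma memLp_aux {g : ℝ → ℝ} (hg : Continuous g) (P : ℝ≥0∞) :
    MeasureTheory.MemLp g P (MeasureTheory.volume.restrict (Set.Ioc (-Real.pi) Real.pi)) := by
  haveI : MeasureTheory.IsFiniteMeasure (MeasureTheory.volume.restrict (Set.Ioc (-Real.pi) Real.pi)) := by
    constructor
    rw [MeasureTheory.Measure.restrict_apply_univ, Real.volume_Ioc]
    exact ENNReal.ofReal_lt_top
  obtain ⟨C, hC⟩ := (isCompact_Icc (a := -Real.pi) (b := Real.pi)).exists_bound_of_continuousOn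
    hg.continuousOn
  exact MeasureTheory.MemLp.of_bound hg.aestronglyMeasurable C (by
    filter_upwards [MeasureTheory.ae_restrict_mem measurableSet_Ioc] with t ht
    exact hC t (Set.Ioc_subset_Icc_self ht))

lemma Lq_mono {f : ℝ → ℂ} (hf : Continuous f) {r s : ℝ} (hr : 1 ≤ r) (hrs : r ≤ s) :
    ((2 * Real.pi)⁻¹ * ∫ t in (-Real.pi)..Real.pi, ‖f t‖ ^ r) ^ (1/r)
      ≤ ((2 * Real.pi)⁻¹ * ∫ t in (-Real.pi)..Real.pi, ‖f t‖ ^ s) ^ (1/s) := by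
  have hle : -Real.pi ≤ Real.pi := by linarith [Real.pi_pos]
  have h2pi : (0:ℝ) < 2 * Real.pi := by positivity
  have hnorm : ∀ u : ℝ, 0 ≤ u → Continuous fun t : ℝ => ‖f t‖ ^ u := by
    intro u hu
    apply Continuous.rpow_const (continuous_norm.comp hf)
    intro t
    right; linarith
  have hIs : (0:ℝ) ≤ ∫ t in (-Real.pi)..Real.pi, ‖f t‖ ^ s :=
    intervalIntegral.integral_nonneg hle fun t _ => Real.rpow_nonneg (norm_nonneg _) s
  rcases eq_or_lt_of_le hrs with h | hlt
  · rw [h]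
  -- Hölder
  set μ := MeasureTheory.volume.restrict (Set.Ioc (-Real.pi) Real.pi) with hμ
  have hP : 1 < s / r := (one_lt_div (by linarith)).mpr hlt
  have hconj : (s/r).HolderConjugate (s/r).conjExponent := Real.HolderConjugate.conjExponent hP
  have key : (∫ t, ‖(fun t => ‖f t‖ ^ r) t‖ * ‖(fun _ : ℝ => (1:ℝ)) t‖ ∂μ)
      ≤ (∫ t, ‖(fun t => ‖f t‖ ^ r) t‖ ^ (s/r) ∂μ) ^ (1/(s/r))
        * (∫ t, ‖(fun _ : ℝ => (1:ℝ)) t‖ ^ ((s/r).conjExponent) ∂μ) ^ (1/((s/r).conjExponent)) :=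
    MeasureTheory.integral_mul_norm_le_Lp_mul_Lq hconj (memLp_aux (hnorm r (by linarith)) _)
      (memLp_aux continuous_const _)
  have habs : ∀ t : ℝ, ‖‖f t‖ ^ r‖ = ‖f t‖ ^ r := fun t =>
    abs_of_nonneg (Real.rpow_nonneg (norm_nonneg _) r)
  have hμuniv : μ Set.univ = ENNReal.ofReal (2 * Real.pi) := by
    rw [hμ, MeasureTheory.Measure.restrict_apply_univ, Real.volume_Ioc]
    congr 1
    ring
  -- simplify the three integrals
  have e1 : (∫ t, ‖(fun t => ‖f t‖ ^ r) t‖ * ‖(fun _ : ℝ => (1:ℝ)) t‖ ∂μ)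
      = ∫ t in (-Real.pi)..Real.pi, ‖f t‖ ^ r := by
    rw [intervalIntegral.integral_of_le hle]
    apply MeasureTheory.integral_congr_ae
    filter_upwards with t
    simp only [norm_one, mul_one, habs t]
  have e2 : (∫ t, ‖(fun t => ‖f t‖ ^ r) t‖ ^ (s/r) ∂μ)
      = ∫ t in (-Real.pi)..Real.pi, ‖f t‖ ^ s := by
    rw [intervalIntegral.integral_of_le hle]
    apply MeasureTheory.integral_congr_ae
    filter_upwards with t
    rw [habs t, ← Real.rpow_mul (norm_nonneg _),
      show r * (s/r) = s by field_simp]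
  have e3 : (∫ t, ‖(fun _ : ℝ => (1:ℝ)) t‖ ^ ((s/r).conjExponent) ∂μ) = 2 * Real.pi := by
    simp only [norm_one, Real.one_rpow]
    rw [MeasureTheory.integral_const, MeasureTheory.measureReal_def, hμuniv, ENNReal.toReal_ofReal (le_of_lt h2pi), smul_eq_mul,
      mul_one]
  rw [e1, e2, e3, one_div_div] at key
  -- now key : ∫ ‖f‖^r ≤ (∫‖f‖^s)^(r/s) * (2π)^(1 - r/s)
  have hconjval : 1/((s/r).conjExponent) = 1 - r/s := by
    rw [Real.conjExponent, one_div_div]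
    have hs : s ≠ 0 := by intro h; rw [h] at hrs; linarith
    have hr0 : r ≠ 0 := by intro h; rw [h] at hr; linarith
    field_simp
  rw [hconjval] at key
  -- divide through
  set A := ∫ t in (-Real.pi)..Real.pi, ‖f t‖ ^ r with hA
  set B := ∫ t in (-Real.pi)..Real.pi, ‖f t‖ ^ s with hB
  have main : (2 * Real.pi)⁻¹ * A ≤ ((2 * Real.pi)⁻¹ * B) ^ (r/s) := by
    calc (2 * Real.pi)⁻¹ * A
        ≤ (2 * Real.pi)⁻¹ * (B ^ (r/s) * (2 * Real.pi) ^ (1 - r/s)) :=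
          mul_le_mul_of_nonneg_left key (by positivity)
      _ = B ^ (r/s) * ((2 * Real.pi) ^ (-1:ℝ) * (2 * Real.pi) ^ (1 - r/s)) := by
          rw [Real.rpow_neg_one]; ring
      _ = B ^ (r/s) * (2 * Real.pi) ^ (-(r/s)) := by
          rw [← Real.rpow_add h2pi]
          congr 1
          ring_nf
      _ = ((2 * Real.pi)⁻¹) ^ (r/s) * B ^ (r/s) := by
          rw [Real.rpow_neg (le_of_lt h2pi), ← Real.inv_rpow (le_of_lt h2pi)]; ring
      _ = ((2 * Real.pi)⁻¹ * B) ^ (r/s) := by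
          rw [← Real.mul_rpow (by positivity) hIs]
  have hIr : (0:ℝ) ≤ A :=
    intervalIntegral.integral_nonneg hle fun t _ => Real.rpow_nonneg (norm_nonneg _) r
  have hr0 : r ≠ 0 := by intro h; rw [h] at hr; linarith
  have hs0 : s ≠ 0 := by intro h; rw [h] at hrs; linarith
  calc ((2 * Real.pi)⁻¹ * A) ^ (1/r)
      ≤ (((2 * Real.pi)⁻¹ * B) ^ (r/s)) ^ (1/r) :=
        Real.rpow_le_rpow (mul_nonneg (by positivity) hIr) main (by positivity)
    _ = ((2 * Real.pi)⁻¹ * B) ^ (1/s) := by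
        rw [← Real.rpow_mul (mul_nonneg (by positivity) hIs)]
        congr 1
        field_simp

lemma l2_le_lp {N : ℕ} (hN : 1 ≤ N) (a : ℕ → ℂ) {pr : ℝ} (hp : 2 ≤ pr) :
    (∑ n ∈ Finset.range N, ‖a n‖ ^ 2) ^ ((1:ℝ)/2)
      ≤ (N : ℝ) ^ ((1:ℝ)/2 - 1/pr) * (∑ n ∈ Finset.range N, ‖a n‖ ^ pr) ^ (1/pr) := by
  have hN0 : (0:ℝ) < N := by exact_mod_cast hN
  have hpr0 : (0:ℝ) < pr := by linarith
  have key := Real.arith_mean_le_rpow_mean (Finset.range N) (fun _ => (N:ℝ)⁻¹)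
    (fun n => ‖a n‖ ^ 2) (fun n _ => by positivity)
    (by rw [Finset.sum_const, Finset.card_range, nsmul_eq_mul]; field_simp)
    (fun n _ => by positivity) (p := pr/2) (by linarith)
  have hz : ∀ n, ((‖a n‖ ^ 2 : ℝ)) ^ (pr/2) = ‖a n‖ ^ pr := by
    intro n
    rw [← Real.rpow_natCast (‖a n‖) 2, ← Real.rpow_mul (norm_nonneg _)]
    congr 1
    push_cast
    field_simp
  simp only [hz] at key
  rw [← Finset.mul_sum, ← Finset.mul_sum] at key
  -- key : N⁻¹ * S₂ ≤ (N⁻¹ * Sₚ) ^ (2/pr)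
  have h1 : (∑ n ∈ Finset.range N, ‖a n‖ ^ 2)
      ≤ (N:ℝ) * ((N:ℝ)⁻¹ * ∑ n ∈ Finset.range N, ‖a n‖ ^ pr) ^ (1/(pr/2)) := by
    have := mul_le_mul_of_nonneg_left key (le_of_lt hN0)
    calc (∑ n ∈ Finset.range N, ‖a n‖ ^ 2)
        = (N:ℝ) * ((N:ℝ)⁻¹ * ∑ n ∈ Finset.range N, ‖a n‖ ^ 2) := by
          field_simp
      _ ≤ (N:ℝ) * ((N:ℝ)⁻¹ * ∑ n ∈ Finset.range N, ‖a n‖ ^ pr) ^ (1/(pr/2)) := this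
  have hSp : (0:ℝ) ≤ ∑ n ∈ Finset.range N, ‖a n‖ ^ pr :=
    Finset.sum_nonneg fun n _ => Real.rpow_nonneg (norm_nonneg _) pr
  have hS2 : (0:ℝ) ≤ ∑ n ∈ Finset.range N, ‖a n‖ ^ 2 :=
    Finset.sum_nonneg fun n _ => by positivity
  calc (∑ n ∈ Finset.range N, ‖a n‖ ^ 2) ^ ((1:ℝ)/2)
      ≤ ((N:ℝ) * ((N:ℝ)⁻¹ * ∑ n ∈ Finset.range N, ‖a n‖ ^ pr) ^ (1/(pr/2))) ^ ((1:ℝ)/2) :=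
        Real.rpow_le_rpow hS2 h1 (by norm_num)
    _ = (N : ℝ) ^ ((1:ℝ)/2 - 1/pr) * (∑ n ∈ Finset.range N, ‖a n‖ ^ pr) ^ (1/pr) := by
        rw [Real.mul_rpow (le_of_lt hN0) (by positivity),
          ← Real.rpow_mul (by positivity),
          Real.mul_rpow (by positivity) hSp]
        have e1 : (1/(pr/2)) * ((1:ℝ)/2) = 1/pr := by field_simp
        rw [e1]
        have e2 : ((N:ℝ)⁻¹) ^ ((1:ℝ)/pr) = (N:ℝ) ^ (-((1:ℝ)/pr)) := by
          rw [← Real.rpow_neg_one ((N:ℝ)), ← Real.rpow_mul (le_of_lt hN0)]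
          congr 1
          ring
        rw [e2, ← mul_assoc, ← Real.rpow_add hN0, sub_eq_add_neg]
lemma l2_le_linf {N : ℕ} (hN : 1 ≤ N) (a : ℕ → ℂ) :
    (∑ n ∈ Finset.range N, ‖a n‖ ^ 2) ^ ((1:ℝ)/2)
      ≤ (N : ℝ) ^ ((1:ℝ)/2) * (((Finset.range N).sup fun n => ‖a n‖₊ : NNReal) : ℝ) := by
  set S : ℝ := (((Finset.range N).sup fun n => ‖a n‖₊ : NNReal) : ℝ) with hS
  have hS0 : 0 ≤ S := NNReal.coe_nonneg _
  have hb : ∀ n ∈ Finset.range N, ‖a n‖ ^ 2 ≤ S ^ 2 := by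
    intro n hn
    have : ‖a n‖₊ ≤ (Finset.range N).sup fun n => ‖a n‖₊ := Finset.le_sup (f := fun n => ‖a n‖₊) hn
    have h2 : ‖a n‖ ≤ S := by exact_mod_cast this
    exact pow_le_pow_left₀ (norm_nonneg _) h2 2
  have h1 : (∑ n ∈ Finset.range N, ‖a n‖ ^ 2) ≤ (N:ℝ) * S ^ 2 := by
    calc (∑ n ∈ Finset.range N, ‖a n‖ ^ 2) ≤ ∑ n ∈ Finset.range N, S ^ 2 :=
        Finset.sum_le_sum hb
      _ = (N:ℝ) * S ^ 2 := by rw [Finset.sum_const, Finset.card_range, nsmul_eq_mul]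
  have hN0 : (0:ℝ) < N := by exact_mod_cast hN
  calc (∑ n ∈ Finset.range N, ‖a n‖ ^ 2) ^ ((1:ℝ)/2)
      ≤ ((N:ℝ) * S ^ 2) ^ ((1:ℝ)/2) :=
        Real.rpow_le_rpow (Finset.sum_nonneg fun n _ => by positivity) h1 (by norm_num)
    _ = (N : ℝ) ^ ((1:ℝ)/2) * S := by
        rw [Real.mul_rpow (le_of_lt hN0) (by positivity), ← Real.rpow_natCast S 2,
          ← Real.rpow_mul hS0]
        norm_num

noncomputable def rs : ℕ → (ℕ → ℂ) × (ℕ → ℂ)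
  | 0 => (fun _ => 1, fun _ => 1)
  | k+1 => (fun n => if n < 2^k then (rs k).1 n else (rs k).2 (n - 2^k),
            fun n => if n < 2^k then (rs k).1 n else -((rs k).2 (n - 2^k)))

lemma rs_norm : ∀ k n, n < 2^k → ‖(rs k).1 n‖ = 1 ∧ ‖(rs k).2 n‖ = 1 := by
  intro k
  induction k with
  | zero => intro n hn; simp [rs]
  | succ k ih =>
    intro n hn
    by_cases h : n < 2^k
    · simp only [rs, if_pos h]
      exact ⟨(ih n h).1, (ih n h).1⟩
    · have h2 : n - 2^k < 2^k := by
        have : (2:ℕ)^(k+1) = 2^k + 2^k := by ring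
        omega
      simp only [rs, if_neg h, norm_neg]
      exact ⟨(ih _ h2).2, (ih _ h2).2⟩

lemma rs_sum (k : ℕ) (t : ℝ) :
    trigSum (2^(k+1)) (rs (k+1)).1 t
      = trigSum (2^k) (rs k).1 t
        + Complex.exp (Complex.I * ((2^k : ℕ) : ℂ) * t) * trigSum (2^k) (rs k).2 t
    ∧ trigSum (2^(k+1)) (rs (k+1)).2 t
      = trigSum (2^k) (rs k).1 t
        - Complex.exp (Complex.I * ((2^k : ℕ) : ℂ) * t) * trigSum (2^k) (rs k).2 t := by
  have hsplit : (2:ℕ)^(k+1) = 2^k + 2^k := by ring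
  have hexp : ∀ m : ℕ, Complex.exp (Complex.I * ((2^k + m : ℕ) : ℂ) * t)
      = Complex.exp (Complex.I * ((2^k : ℕ) : ℂ) * t) * Complex.exp (Complex.I * (m : ℂ) * t) := by
    intro m
    rw [← Complex.exp_add]
    congr 1
    push_cast
    ring
  constructor
  · unfold trigSum
    rw [hsplit, Finset.sum_range_add]
    congr 1
    · refine Finset.sum_congr rfl fun n hn => ?_
      rw [Finset.mem_range] at hn
      simp only [rs, if_pos hn]
    · rw [Finset.mul_sum]
      refine Finset.sum_congr rfl fun m hm => ?_
      have : ¬ (2^k + m < 2^k) := by omega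
      simp only [rs, if_neg this]
      rw [hexp m]
      have : 2^k + m - 2^k = m := by omega
      rw [this]
      ring
  · unfold trigSum
    rw [hsplit, Finset.sum_range_add]
    have key : ∀ m ∈ Finset.range (2^k),
        (rs (k+1)).2 (2^k + m) * Complex.exp (Complex.I * ((2^k + m : ℕ) : ℂ) * t)
        = -(Complex.exp (Complex.I * ((2^k : ℕ) : ℂ) * t)
            * ((rs k).2 m * Complex.exp (Complex.I * (m : ℂ) * t))) := by
      intro m hm
      have hlt : ¬ (2^k + m < 2^k) := by omega
      simp only [rs, if_neg hlt]
      rw [hexp m, show 2^k + m - 2^k = m from by omega]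
      ring
    rw [Finset.sum_congr rfl key, Finset.sum_neg_distrib, ← Finset.mul_sum]
    have hcoef : ∀ n ∈ Finset.range (2^k),
        (rs (k+1)).2 n * Complex.exp (Complex.I * (n : ℂ) * t)
        = (rs k).1 n * Complex.exp (Complex.I * (n : ℂ) * t) := by
      intro n hn
      rw [Finset.mem_range] at hn
      simp only [rs, if_pos hn]
    rw [Finset.sum_congr rfl hcoef]
    ring

lemma rs_bound : ∀ k (t : ℝ),
    ‖trigSum (2^k) (rs k).1 t‖ ^ 2 + ‖trigSum (2^k) (rs k).2 t‖ ^ 2 = 2^(k+1) := by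
  intro k
  induction k with
  | zero =>
    intro t
    have : ∀ b : ℕ → ℂ, trigSum 1 b t = b 0 := by
      intro b
      unfold trigSum
      rw [Finset.sum_range_one]
      norm_num
    simp only [pow_zero]
    rw [this, this]
    simp [rs]
    norm_num
  | succ k ih =>
    intro t
    obtain ⟨h1, h2⟩ := rs_sum k t
    rw [h1, h2]
    set A := trigSum (2^k) (rs k).1 t
    set B := Complex.exp (Complex.I * ((2^k : ℕ) : ℂ) * t) * trigSum (2^k) (rs k).2 t with hB
    have hpar : ‖A + B‖ * ‖A + B‖ + ‖A - B‖ * ‖A - B‖ = 2 * (‖A‖ * ‖A‖ + ‖B‖ * ‖B‖) :=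
      by simpa only [sq] using parallelogram_law_with_norm ℂ A B
    have hBnorm : ‖B‖ = ‖trigSum (2^k) (rs k).2 t‖ := by
      rw [hB, norm_mul]
      have : ‖Complex.exp (Complex.I * ((2^k : ℕ) : ℂ) * t)‖ = 1 := by
        rw [Complex.norm_exp]
        have : (Complex.I * ((2^k : ℕ) : ℂ) * (t : ℂ)).re = 0 := by
          have hc : Complex.I * ((2^k : ℕ) : ℂ) * (t : ℂ)
              = ((((2^k : ℕ) : ℝ) * t : ℝ) : ℂ) * Complex.I := by
            push_cast
            ring
          rw [hc, Complex.mul_re, Complex.ofReal_re, Complex.ofReal_im, Complex.I_re,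
            Complex.I_im]
          ring
        rw [this, Real.exp_zero]
      rw [this, one_mul]
    have expand : ‖A + B‖ ^ 2 + ‖A - B‖ ^ 2 = 2 * (‖A‖ ^ 2 + ‖B‖ ^ 2) := by
      rw [sq, sq, sq, sq]; exact hpar
    rw [expand, hBnorm, ih t]
    ring

lemma rs_L1 (k : ℕ) :
    (2^k : ℝ) / Real.sqrt (2^(k+1))
      ≤ (2*Real.pi)⁻¹ * ∫ t in (-Real.pi)..Real.pi, ‖trigSum (2^k) (rs k).1 t‖ := by
  have hle : -Real.pi ≤ Real.pi := by linarith [Real.pi_pos]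
  set P := trigSum (2^k) (rs k).1 with hP
  have hcont : Continuous P := trigSum_cont _ _
  set C := Real.sqrt ((2:ℝ)^(k+1)) with hC
  have hC0 : 0 < C := Real.sqrt_pos.mpr (by positivity)
  have hsup : ∀ t : ℝ, ‖P t‖ ≤ C := by
    intro t
    have h1 : ‖P t‖^2 ≤ (2:ℝ)^(k+1) := by
      have h2 := rs_bound k t
      nlinarith [sq_nonneg ‖trigSum (2^k) (rs k).2 t‖]
    calc ‖P t‖ = Real.sqrt (‖P t‖^2) := by
          rw [Real.sqrt_sq (norm_nonneg _)]
      _ ≤ C := Real.sqrt_le_sqrt h1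
  have hpars : (2*Real.pi)⁻¹ * ∫ t in (-Real.pi)..Real.pi, ‖P t‖ ^ (2:ℝ) = (2^k : ℝ) := by
    rw [hP, parseval]
    have h3 : ∀ n ∈ Finset.range (2^k), ‖(rs k).1 n‖^2 = 1 := by
      intro n hn
      rw [(rs_norm k n (Finset.mem_range.mp hn)).1]
      norm_num
    rw [Finset.sum_congr rfl h3, Finset.sum_const, Finset.card_range]
    simp
  have hcont2 : Continuous fun t : ℝ => ‖P t‖ ^ (2:ℝ) :=
    Continuous.rpow_const hcont.norm (fun t => Or.inr (by norm_num))
  have hmono : ∫ t in (-Real.pi)..Real.pi, ‖P t‖ ^ (2:ℝ)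
      ≤ C * ∫ t in (-Real.pi)..Real.pi, ‖P t‖ := by
    rw [← intervalIntegral.integral_const_mul]
    apply intervalIntegral.integral_mono_on hle
    · exact hcont2.intervalIntegrable _ _
    · exact (continuous_const.mul hcont.norm).intervalIntegrable _ _
    · intro t ht
      have h4 : ‖P t‖ ^ (2:ℝ) = ‖P t‖ * ‖P t‖ := by
        rw [show (2:ℝ) = ((2:ℕ):ℝ) by norm_num, Real.rpow_natCast]
        ring
      rw [h4]
      exact mul_le_mul_of_nonneg_right (hsup t) (norm_nonneg _)
  rw [div_le_iff₀ hC0]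
  calc (2^k : ℝ) = (2*Real.pi)⁻¹ * ∫ t in (-Real.pi)..Real.pi, ‖P t‖ ^ (2:ℝ) := hpars.symm
    _ ≤ (2*Real.pi)⁻¹ * (C * ∫ t in (-Real.pi)..Real.pi, ‖P t‖) := by
        apply mul_le_mul_of_nonneg_left hmono
        positivity
    _ = ((2*Real.pi)⁻¹ * ∫ t in (-Real.pi)..Real.pi, ‖P t‖) * C := by ring


/-- In the region `𝒞` (`0 ≤ 1/p ≤ 1/2`, `1/2 ≤ 1/q ≤ 1`) there is an absolute constant
`c_𝒞 > 0` with `c_𝒞 N^{1/2-1/p} ≤ C_N(p→q) ≤ N^{1/2-1/p}`: the upper bound holds for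
every `a`, and the lower bound is witnessed by some nonzero `a`. -/
theorem stmt2 :
    ∃ c : ℝ, 0 < c ∧
      ∀ p q : ℝ≥0∞, p⁻¹ ≤ 1 / 2 → 1 / 2 ≤ q⁻¹ → q⁻¹ ≤ 1 →
        ∀ N : ℕ, 1 ≤ N →
          (∀ a : ℕ → ℂ, LqNorm q (trigSum N a) ≤
            (N : ℝ) ^ ((1 : ℝ) / 2 - p⁻¹.toReal) * lpNorm p N a) ∧
          (∃ a : ℕ → ℂ, (∃ n, n < N ∧ a n ≠ 0) ∧
            c * (N : ℝ) ^ ((1 : ℝ) / 2 - p⁻¹.toReal) * lpNorm p N a ≤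
              LqNorm q (trigSum N a)) := by
  refine ⟨1/2, by norm_num, ?_⟩
  intro p q hp hq1 hq2 N hN
  have hπ : (0:ℝ) < Real.pi := Real.pi_pos
  have hN0 : (0:ℝ) < N := by exact_mod_cast hN
  have hqtop : q ≠ ⊤ := by
    intro h
    rw [h] at hq1
    simp at hq1
  have hq_ge1 : 1 ≤ q := by
    rw [← ENNReal.inv_le_one]
    exact hq2
  have hq_le2 : q ≤ 2 := by
    rw [one_div] at hq1
    exact ENNReal.inv_le_inv.mp hq1
  have hqr1 : 1 ≤ q.toReal := by
    have := ENNReal.toReal_mono hqtop hq_ge1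
    simpa using this
  have hqr2 : q.toReal ≤ 2 := by
    have := ENNReal.toReal_mono (by norm_num : (2:ℝ≥0∞) ≠ ⊤) hq_le2
    simpa using this
  -- facts about p
  have hp2 : 2 ≤ p := by
    rw [one_div] at hp
    exact ENNReal.inv_le_inv.mp hp
  have hpr2 : p ≠ ⊤ → 2 ≤ p.toReal := by
    intro hptop
    have := ENNReal.toReal_mono hptop hp2
    simpa using this
  have hpinv : p ≠ ⊤ → p⁻¹.toReal = 1 / p.toReal := by
    intro hptop
    rw [ENNReal.toReal_inv, one_div]
  constructor
  · -- upper bound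
    intro a
    rw [LqNorm, if_neg hqtop]
    have step2 := Lq_mono (trigSum_cont N a) hqr1 hqr2
    rw [parseval] at step2
    refine le_trans step2 ?_
    by_cases hptop : p = ⊤
    · subst hptop
      rw [_root_.lpNorm, if_pos rfl]
      have : (⊤ : ℝ≥0∞)⁻¹.toReal = 0 := by simp
      rw [this, sub_zero]
      exact l2_le_linf hN a
    · rw [_root_.lpNorm, if_neg hptop, hpinv hptop]
      exact l2_le_lp hN a (hpr2 hptop)
  · -- lower bound
    set k := Nat.log 2 N with hk
    set M := 2^k with hM
    have hM1 : M ≤ N := Nat.pow_log_le_self 2 (by omega)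
    have hM2 : N < 2^(k+1) := Nat.lt_pow_succ_log_self (by norm_num) N
    have hMpos : 0 < M := Nat.pow_pos (by norm_num)
    set a : ℕ → ℂ := fun n => if n < M then (rs k).1 n else 0 with ha
    have ha0 : a 0 ≠ 0 := by
      rw [ha]
      simp only [if_pos hMpos]
      intro h
      have := (rs_norm k 0 hMpos).1
      rw [h] at this
      simp at this
    refine ⟨a, ⟨0, by omega, ha0⟩, ?_⟩
    have htrig : ∀ t : ℝ, trigSum N a t = trigSum M (rs k).1 t := by
      intro t
      rw [trigSum, trigSum]
      rw [← Finset.sum_subset (Finset.range_subset_range.mpr hM1)]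
      · refine Finset.sum_congr rfl fun n hn => ?_
        rw [Finset.mem_range] at hn
        rw [ha]
        simp only [if_pos hn]
      · intro x _ hnx
        rw [Finset.mem_range] at hnx
        rw [ha]
        simp only [if_neg hnx, zero_mul]
    -- L^q ≥ L^1
    have low1 := Lq_mono (trigSum_cont N a) (le_refl (1:ℝ)) hqr1
    rw [show ((1:ℝ)/1) = 1 by norm_num, Real.rpow_one] at low1
    simp only [Real.rpow_one] at low1
    have hLq : LqNorm q (trigSum N a)
        = ((2 * Real.pi)⁻¹ * ∫ t in (-Real.pi)..Real.pi, ‖trigSum N a t‖ ^ q.toReal) ^ (1/q.toReal) := by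
      rw [LqNorm, if_neg hqtop]
    have hL1 : (2^k : ℝ) / Real.sqrt (2^(k+1)) ≤ LqNorm q (trigSum N a) := by
      rw [hLq]
      refine le_trans ?_ low1
      have heq : (∫ t in (-Real.pi)..Real.pi, ‖trigSum N a t‖)
          = ∫ t in (-Real.pi)..Real.pi, ‖trigSum M (rs k).1 t‖ := by
        apply intervalIntegral.integral_congr
        intro t _
        simp only [htrig t]
      rw [heq]
      exact rs_L1 k
    refine le_trans ?_ hL1
    -- arithmetic
    set SM := Real.sqrt ((2:ℝ)^(k+1)) with hSM
    have hSMsq : SM ^ 2 = (2:ℝ)^(k+1) := Real.sq_sqrt (by positivity)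
    have hSM0 : 0 < SM := Real.sqrt_pos.mpr (by positivity)
    have hNle : (N:ℝ) ≤ (2:ℝ)^(k+1) := by
      have : (N:ℝ) < ((2^(k+1) : ℕ) : ℝ) := by exact_mod_cast hM2
      push_cast at this
      linarith
    have hroot : (N:ℝ) ^ ((1:ℝ)/2) ≤ SM := by
      rw [← Real.sqrt_eq_rpow]
      exact Real.sqrt_le_sqrt hNle
    have hrw : ((2:ℝ)^k) ≥ SM * SM / 2 := by
      have h2 : (2:ℝ)^(k+1) = 2 * 2^k := by ring
      nlinarith [hSMsq, h2]
    have target : (1/2 : ℝ) * (N : ℝ) ^ ((1 : ℝ) / 2 - p⁻¹.toReal) * lpNorm p N a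
        ≤ (2^k : ℝ) / SM := by
      have hMN : ((M:ℕ) : ℝ) ≤ (N:ℝ) := by exact_mod_cast hM1
      have hMcast : ((M:ℕ) : ℝ) = (2:ℝ)^k := by
        rw [hM]
        push_cast
        ring
      have main : (N : ℝ) ^ ((1 : ℝ) / 2 - p⁻¹.toReal) * lpNorm p N a ≤ (N:ℝ) ^ ((1:ℝ)/2) := by
        by_cases hptop : p = ⊤
        · subst hptop
          have e0 : (⊤ : ℝ≥0∞)⁻¹.toReal = 0 := by simp
          rw [e0, sub_zero]
          have hlp : lpNorm ⊤ N a = 1 := by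
            rw [_root_.lpNorm, if_pos rfl]
            have hsup : (Finset.range N).sup (fun n => ‖a n‖₊) = 1 := by
              apply le_antisymm
              · apply Finset.sup_le
                intro n _
                by_cases h : n < M
                · have : ‖a n‖ = 1 := by
                    rw [ha]; simp only [if_pos h]; exact (rs_norm k n h).1
                  have : (‖a n‖₊ : ℝ) ≤ 1 := by rw [coe_nnnorm, this]
                  exact_mod_cast this
                · have : ‖a n‖ = 0 := by rw [ha]; simp [h]
                  have : (‖a n‖₊ : ℝ) ≤ 1 := by rw [coe_nnnorm, this]; norm_num
                  exact_mod_cast this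
              · have h1 : ‖a 0‖ = 1 := by
                  rw [ha]; simp only [if_pos hMpos]; exact (rs_norm k 0 hMpos).1
                have h2 : (1 : NNReal) = ‖a 0‖₊ := by
                  have : (‖a 0‖₊ : ℝ) = 1 := by rw [coe_nnnorm, h1]
                  exact_mod_cast this.symm
                rw [h2]
                exact Finset.le_sup (f := fun n => ‖a n‖₊) (Finset.mem_range.mpr hN)
            rw [hsup]
            norm_num
          rw [hlp, mul_one]
        · -- p finite
          have hpr := hpr2 hptop
          have hlp : lpNorm p N a = ((M:ℕ) : ℝ) ^ (1/p.toReal) := by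
            rw [_root_.lpNorm, if_neg hptop]
            have hsum : (∑ n ∈ Finset.range N, ‖a n‖ ^ p.toReal) = ((M:ℕ) : ℝ) := by
              rw [← Finset.sum_subset (Finset.range_subset_range.mpr hM1)]
              · have : ∀ n ∈ Finset.range M, ‖a n‖ ^ p.toReal = 1 := by
                  intro n hn
                  rw [Finset.mem_range] at hn
                  rw [ha]
                  simp only [if_pos hn]
                  rw [(rs_norm k n hn).1, Real.one_rpow]
                rw [Finset.sum_congr rfl this, Finset.sum_const, Finset.card_range]
                simp
              · intro x _ hnx
                rw [Finset.mem_range] at hnx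
                rw [ha]
                simp only [if_neg hnx, norm_zero]
                exact Real.zero_rpow (by linarith)
            rw [hsum]
          rw [hlp, hpinv hptop]
          have hprpos : (0:ℝ) < p.toReal := by linarith
          calc (N : ℝ) ^ ((1:ℝ)/2 - 1/p.toReal) * ((M:ℕ) : ℝ) ^ (1/p.toReal)
              ≤ (N : ℝ) ^ ((1:ℝ)/2 - 1/p.toReal) * (N : ℝ) ^ (1/p.toReal) := by
                apply mul_le_mul_of_nonneg_left
                  (Real.rpow_le_rpow (by positivity) hMN (by positivity)) (by positivity)
            _ = (N:ℝ) ^ ((1:ℝ)/2) := by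
                rw [← Real.rpow_add hN0]
                congr 1
                ring
      calc (1/2 : ℝ) * (N : ℝ) ^ ((1 : ℝ) / 2 - p⁻¹.toReal) * lpNorm p N a
          ≤ (1/2 : ℝ) * (N:ℝ) ^ ((1:ℝ)/2) := by
            rw [mul_assoc]
            apply mul_le_mul_of_nonneg_left main (by norm_num)
        _ ≤ (1/2 : ℝ) * SM := by
            apply mul_le_mul_of_nonneg_left hroot (by norm_num)
        _ ≤ (2^k : ℝ) / SM := by
            rw [le_div_iff₀ hSM0]
            have h2 : (2:ℝ)^(k+1) = 2 * 2^k := by ring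
            nlinarith [hSMsq, h2]
    exact target
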